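/- Let K_0, ..., K_{n−1} (n ≥ 3) be open arcs of a circle C covering C with n minimal, cyclically ordered clockwise, and let A be an open arc with A ⊆ K_i ∪ K_{i+1}. Then A \ ΔK_{i+1} is a connected subset of the circle, where ΔK_{i+1} = K_{i+1} ∩ K_{i+2}. -/

import Mathlib

noncomputable section

/-- The circle, modeled as `ℝ / ℤ`. -/
abbrev Circ : Type := AddCircle (1 : ℝ)

/-- The open arc starting at `a` and running clockwise for length `d`. -/
def arc (a : Circ) (d : ℝ) : Set Circ :=
  (fun t : ℝ => a + (↑t : Circ)) '' Set.Ioo 0 d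

/-- An open (proper) arc of the circle. -/
def IsArc (A : Set Circ) : Prop :=
  ∃ (a : Circ) (d : ℝ), 0 < d ∧ d < 1 ∧ A = arc a d

/-- A chain in `F`: a list of distinct members of `F` with consecutive members
intersecting. -/
def ArcChain (F : Set (Set Circ)) (P : List (Set Circ)) : Prop :=
  P.Nodup ∧ (∀ A ∈ P, A ∈ F) ∧ List.Chain' (fun A B => (A ∩ B).Nonempty) P

/-- A longest chain in `F`. -/
def IsLongestArcChain (F : Set (Set Circ)) (P : List (Set Circ)) : Prop :=
  ArcChain F P ∧ ∀ Q, ArcChain F Q → Q.length ≤ P.length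

/-- The points `p 0, …, p (n-1)` occur consecutively in clockwise order on the circle. -/
def CyclicallyOrdered {n : ℕ} (p : Fin n → Circ) : Prop :=
  ∃ (a : Circ) (t : Fin n → ℝ), StrictMono t ∧ (∀ i, t i ∈ Set.Ico (0 : ℝ) 1) ∧
    ∀ i, p i = a + (↑(t i) : Circ)

/-- The open clockwise arc strictly between the points `p` and `q`. -/
def arcBetween (p q : Circ) : Set Circ :=
  {x | ∃ s u : ℝ, 0 < s ∧ s < u ∧ u < 1 ∧ x = p + (↑s : Circ) ∧ q = p + (↑u : Circ)}

/-- `A` precedes `B` in the list `L`. -/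
def Precedes (L : List (Set Circ)) (A B : Set Circ) : Prop :=
  ∃ i j : ℕ, i < j ∧ j < L.length ∧ L.getD i ∅ = A ∧ L.getD j ∅ = B

/-- `ΔK_i = {x : ℓ(K_{i+1}) < x < r(K_i)}`, for arcs `K i = arc (c i) (d i)`. -/
def deltaK {n : ℕ} [NeZero n] (c : Fin n → Circ) (d : Fin n → ℝ) (i : Fin n) :
    Set Circ :=
  arcBetween (c (i + 1)) (c i + (↑(d i) : Circ))


section S8Helpers
open Set

lemma s8_coe_add (a b : ℝ) : ((a + b : ℝ) : Circ) = ↑a + ↑b := rfl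

lemma s8_coe_eq {x y : ℝ} : (↑x : Circ) = ↑y ↔ ∃ k : ℤ, y = x + k := by
  rw [QuotientAddGroup.eq]
  constructor
  · rintro ⟨k, hk⟩
    refine ⟨k, ?_⟩
    have h2 : (k : ℤ) • (1:ℝ) = -x + y := hk
    rw [zsmul_eq_mul, mul_one] at h2
    linarith
  · rintro ⟨k, rfl⟩
    refine ⟨k, ?_⟩
    show (k : ℤ) • (1:ℝ) = -x + (x + k)
    rw [zsmul_eq_mul, mul_one]; ring

lemma s8_rep_Ico (ζ : ℝ) (x : Circ) : ∃ r : ℝ, ζ ≤ r ∧ r < ζ + 1 ∧ (↑r : Circ) = x := by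
  obtain ⟨r0, hr0⟩ := QuotientAddGroup.mk_surjective x
  refine ⟨toIcoMod one_pos ζ r0, (toIcoMod_mem_Ico one_pos ζ r0).1,
    (toIcoMod_mem_Ico one_pos ζ r0).2, ?_⟩
  rw [← hr0, s8_coe_eq]
  have h2 := toIcoMod_sub_self one_pos ζ r0
  rw [zsmul_eq_mul, mul_one] at h2
  push_cast at h2
  exact ⟨toIcoDiv one_pos ζ r0, by linarith⟩

lemma s8_mem_arc {L d r : ℝ} : (↑r : Circ) ∈ arc (↑L) d ↔ ∃ k : ℤ, L < r + k ∧ r + k < L + d := by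
  constructor
  · rintro ⟨t, ⟨ht0, htd⟩, h⟩
    have h2 : ((L + t : ℝ) : Circ) = ↑r := h
    obtain ⟨k, hk⟩ := s8_coe_eq.mp h2
    exact ⟨-k, by push_cast; constructor <;> linarith⟩
  · rintro ⟨k, hk1, hk2⟩
    refine ⟨r + k - L, ⟨by linarith, by linarith⟩, ?_⟩
    show ((L : ℝ) : Circ) + ↑(r + (k:ℝ) - L) = ↑r
    rw [← s8_coe_add]
    rw [s8_coe_eq]
    exact ⟨-k, by push_cast; ring⟩

lemma s8_arc_eq_image {L : ℝ} (d : ℝ) : arc (↑L) d = (fun r : ℝ => (↑r : Circ)) '' Ioo L (L + d) := by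
  ext x
  constructor
  · rintro ⟨t, ⟨ht0, htd⟩, h⟩
    exact ⟨L + t, ⟨by linarith, by linarith⟩, h⟩
  · rintro ⟨r, ⟨h1, h2⟩, rfl⟩
    exact ⟨r - L, ⟨by linarith, by linarith⟩, by show ((L:ℝ):Circ) + ↑(r - L) = ↑r; rw [← s8_coe_add]; norm_num⟩

lemma s8_int_eq_zero {k : ℤ} (h1 : (-1:ℝ) < (k:ℝ)) (h2 : (k:ℝ) < 1) : (k:ℝ) = 0 := by
  have a1 : (-1:ℤ) < k := by exact_mod_cast h1
  have a2 : k < 1 := by exact_mod_cast h2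
  have : k = 0 := by omega
  simp [this]

/-- lift of an arc not containing a given cut point -/
lemma s8_liftArc {L d ζ : ℝ} (hd0 : 0 < d) (hd1 : d < 1)
    (hz : (↑ζ : Circ) ∉ arc (↑L) d) :
    ∃ lam : ℝ, ζ ≤ lam ∧ lam < ζ + 1 ∧ lam + d ≤ ζ + 1 ∧ (↑lam : Circ) = ↑L ∧
      (∀ r, ζ < r → r < ζ + 1 → ((↑r : Circ) ∈ arc (↑L) d ↔ (lam < r ∧ r < lam + d))) := by
  obtain ⟨lam, h1, h2, h3⟩ := s8_rep_Ico ζ ((↑L : Circ))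
  have harc : arc (↑L) d = arc (↑lam) d := by rw [h3]
  have hub : lam + d ≤ ζ + 1 := by
    by_contra hcon
    push_neg at hcon
    apply hz
    rw [harc, s8_mem_arc]
    refine ⟨1, ?_, ?_⟩ <;> push_cast
    · -- lam < ζ + 1 : need lam < ζ + 1; but also lam ≠ ζ+1... lam < ζ+1 from h2
      linarith
    · linarith
  refine ⟨lam, h1, h2, hub, h3, ?_⟩
  intro r hr1 hr2
  rw [harc, s8_mem_arc]
  constructor
  · rintro ⟨k, hk1, hk2⟩
    have hk0 : (k : ℝ) = 0 := s8_int_eq_zero (by linarith) (by linarith)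
    rw [hk0] at hk1 hk2
    exact ⟨by linarith, by linarith⟩
  · rintro ⟨ha, hb⟩
    exact ⟨0, by push_cast; exact ⟨by linarith, by linarith⟩⟩

/-- lift of an arc containing the cut point -/
lemma s8_liftArcWrap {L d ζ : ℝ} (hd1 : d < 1) (hz : (↑ζ : Circ) ∈ arc (↑L) d) :
    ∃ mu : ℝ, mu < ζ ∧ ζ < mu + d ∧ (↑mu : Circ) = ↑L ∧
      (∀ r, ζ < r → r < ζ + 1 → ((↑r : Circ) ∈ arc (↑L) d ↔ (r < mu + d ∨ mu + 1 < r))) := by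
  rw [s8_mem_arc] at hz
  obtain ⟨k, hk1, hk2⟩ := hz
  refine ⟨L - k, by linarith, by linarith, by rw [s8_coe_eq]; exact ⟨k, by ring⟩, ?_⟩
  intro r hr1 hr2
  set mu := L - (k:ℝ) with hmu
  have harc : arc (↑L) d = arc (↑mu) d := by
    rw [show ((mu:ℝ):Circ) = ↑L from by rw [s8_coe_eq]; exact ⟨k, by ring⟩]
  have hmub : ζ - 1 < mu := by linarith
  rw [harc, s8_mem_arc]
  constructor
  · rintro ⟨m, hm1, hm2⟩
    -- r + m ∈ (mu, mu+d) ⊆ (ζ-1, ζ+1); r ∈ (ζ, ζ+1) so m ∈ (-2, 1): m = -1 or 0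
    have a1 : (-2:ℤ) < m := by
      have : (-2:ℝ) < (m:ℝ) := by linarith
      exact_mod_cast this
    have a2 : m < 1 := by
      have : (m:ℝ) < 1 := by linarith
      exact_mod_cast this
    interval_cases m
    · right
      push_cast at hm1 hm2
      linarith
    · left
      push_cast at hm1 hm2
      linarith
  · rintro hcase
    rcases hcase with h | h
    · exact ⟨0, by push_cast; exact ⟨by linarith, by linarith⟩⟩
    · exact ⟨-1, by push_cast; exact ⟨by linarith, by linarith⟩⟩

/-- two lifted arcs covering the circle -/
lemma s8_twoCover {X Y : Set Circ} {u1 v1 u2 v2 : ℝ}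
    (hX : ∀ r : ℝ, u1 < r → r < v1 → (↑r : Circ) ∈ X)
    (hY : ∀ r : ℝ, u2 < r → r < v2 → (↑r : Circ) ∈ Y)
    (h1 : u2 < v1) (h2 : u1 + 1 < v2) : X ∪ Y = univ := by
  ext x
  simp only [mem_univ, iff_true, mem_union]
  obtain ⟨r0, hr0⟩ := QuotientAddGroup.mk_surjective x
  set w := toIocMod one_pos u1 r0 with hw
  have hmem := toIocMod_mem_Ioc one_pos u1 r0
  have hcoe : (↑w : Circ) = x := by
    rw [← hr0, s8_coe_eq]
    have h3 := toIocMod_sub_self one_pos u1 r0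
    rw [zsmul_eq_mul, mul_one] at h3
    push_cast at h3
    exact ⟨toIocDiv one_pos u1 r0, by linarith⟩
  rw [← hcoe]
  rcases lt_or_ge w v1 with h | h
  · rcases lt_or_ge u1 w with h' | h'
    · exact Or.inl (hX w h' h)
    · exact absurd hmem.1 (not_lt.mpr h')
  · exact Or.inr (hY w (lt_of_lt_of_le h1 h) (lt_of_le_of_lt hmem.2 h2))

/-- cyclic order of three points is preserved by lifting to a window [ζ, ζ+1) -/
lemma s8_cyc3 {x y w x' y' w' ζ : ℝ} (hxy : x < y) (hyw : y < w) (hwx : w - x < 1)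
    (hx1 : ζ ≤ x') (hx2 : x' < ζ + 1) (hy1 : ζ ≤ y') (hy2 : y' < ζ + 1)
    (hw1 : ζ ≤ w') (hw2 : w' < ζ + 1)
    (ex : (↑x' : Circ) = ↑x) (ey : (↑y' : Circ) = ↑y) (ew : (↑w' : Circ) = ↑w) :
    (x' < y' ∧ y' < w') ∨ (y' < w' ∧ w' < x') ∨ (w' < x' ∧ x' < y') := by
  obtain ⟨p, hp⟩ := s8_coe_eq.mp ex
  obtain ⟨q, hq⟩ := s8_coe_eq.mp ey
  obtain ⟨r, hr⟩ := s8_coe_eq.mp ew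
  -- (q-p) = (y-x) - (y'-x') with y-x ∈ (0,1), y'-x' ∈ (-1,1) ⇒ q-p ∈ {0,1}, etc.
  have b1 : q - p = 0 ∨ q - p = 1 := by
    have l1 : ((q - p : ℤ) : ℝ) = (y - x) - (y' - x') := by push_cast; linarith
    have l2 : ((q - p : ℤ) : ℝ) < 2 := by rw [l1]; linarith
    have l3 : (-1 : ℝ) < ((q - p : ℤ) : ℝ) := by rw [l1]; linarith
    have m2 : q - p < 2 := by exact_mod_cast l2
    have m3 : (-1:ℤ) < q - p := by exact_mod_cast l3
    omega
  have b2 : r - q = 0 ∨ r - q = 1 := by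
    have l1 : ((r - q : ℤ) : ℝ) = (w - y) - (w' - y') := by push_cast; linarith
    have l2 : ((r - q : ℤ) : ℝ) < 2 := by rw [l1]; linarith
    have l3 : (-1 : ℝ) < ((r - q : ℤ) : ℝ) := by rw [l1]; linarith
    have m2 : r - q < 2 := by exact_mod_cast l2
    have m3 : (-1:ℤ) < r - q := by exact_mod_cast l3
    omega
  have b3 : r - p = 0 ∨ r - p = 1 := by
    have l1 : ((r - p : ℤ) : ℝ) = (w - x) - (w' - x') := by push_cast; linarith
    have l2 : ((r - p : ℤ) : ℝ) < 2 := by rw [l1]; linarith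
    have l3 : (-1 : ℝ) < ((r - p : ℤ) : ℝ) := by rw [l1]; linarith
    have m2 : r - p < 2 := by exact_mod_cast l2
    have m3 : (-1:ℤ) < r - p := by exact_mod_cast l3
    omega
  rcases b1 with c1 | c1 <;> rcases b2 with c2 | c2
  · -- q = p, r = q : same order
    left
    have e1 : (q:ℝ) = p := by have : q = p := by omega
                              rw [this]
    have e2 : (r:ℝ) = q := by have : r = q := by omega
                              rw [this]
    constructor <;> linarith
  · -- q = p, r = q + 1 : w' < x' < y'
    right; right
    have e1 : (q:ℝ) = p := by have : q = p := by omega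
                              rw [this]
    have e2 : (r:ℝ) = q + 1 := by have : r = q + 1 := by omega
                                  rw [this]; push_cast; ring
    constructor <;> linarith
  · -- q = p + 1, r = q : y' < w' < x'
    right; left
    have e1 : (q:ℝ) = p + 1 := by have : q = p + 1 := by omega
                                  rw [this]; push_cast; ring
    have e2 : (r:ℝ) = q := by have : r = q := by omega
                              rw [this]
    constructor <;> linarith
  · exfalso
    rcases b3 with c3 | c3 <;> omega

lemma s8_mem_arc_of {L d r : ℝ} (h1 : L < r) (h2 : r < L + d) : (↑r : Circ) ∈ arc (↑L) d := by
  rw [s8_arc_eq_image]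
  exact ⟨r, ⟨h1, h2⟩, rfl⟩

lemma s8_arc_subset {L1 L2 d1 d2 : ℝ} (h1 : L2 ≤ L1) (h2 : L1 + d1 ≤ L2 + d2) :
    arc (↑L1 : Circ) d1 ⊆ arc (↑L2) d2 := by
  rw [s8_arc_eq_image, s8_arc_eq_image]
  exact Set.image_mono (Set.Ioo_subset_Ioo h1 h2)

lemma s8_rot {n : ℕ} {t : Fin n → ℝ} (ht : StrictMono t) {a b c : Fin n}
    (h : (a.val < b.val ∧ b.val < c.val) ∨ (b.val < c.val ∧ c.val < a.val) ∨
      (c.val < a.val ∧ a.val < b.val)) :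
    (t a < t b ∧ t b < t c) ∨ (t b < t c ∧ t c < t a) ∨ (t c < t a ∧ t a < t b) := by
  have m : ∀ x y : Fin n, x.val < y.val → t x < t y := fun x y h' => ht (Fin.lt_def.mpr h')
  rcases h with ⟨h1, h2⟩ | ⟨h1, h2⟩ | ⟨h1, h2⟩
  · exact Or.inl ⟨m _ _ h1, m _ _ h2⟩
  · exact Or.inr (Or.inl ⟨m _ _ h1, m _ _ h2⟩)
  · exact Or.inr (Or.inr ⟨m _ _ h1, m _ _ h2⟩)

lemma s8_cyc {ga gb gc la lb lc ζ w : ℝ}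
    (hrot : (ga < gb ∧ gb < gc) ∨ (gb < gc ∧ gc < ga) ∨ (gc < ga ∧ ga < gb))
    (hga : w ≤ ga) (hga2 : ga < w + 1) (hgb : w ≤ gb) (hgb2 : gb < w + 1)
    (hgc : w ≤ gc) (hgc2 : gc < w + 1)
    (ha1 : ζ ≤ la) (ha2 : la < ζ + 1) (hb1 : ζ ≤ lb) (hb2 : lb < ζ + 1)
    (hc1 : ζ ≤ lc) (hc2 : lc < ζ + 1)
    (ca : (↑la : Circ) = ↑ga) (cb : (↑lb : Circ) = ↑gb) (cc : (↑lc : Circ) = ↑gc) :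
    (la < lb ∧ lb < lc) ∨ (lb < lc ∧ lc < la) ∨ (lc < la ∧ la < lb) := by
  rcases hrot with ⟨h1, h2⟩ | ⟨h1, h2⟩ | ⟨h1, h2⟩
  · exact s8_cyc3 h1 h2 (by linarith) ha1 ha2 hb1 hb2 hc1 hc2 ca cb cc
  · have := s8_cyc3 h1 h2 (by linarith) hb1 hb2 hc1 hc2 ha1 ha2 cb cc ca
    tauto
  · have := s8_cyc3 h1 h2 (by linarith) hc1 hc2 ha1 ha2 hb1 hb2 cc ca cb
    tauto

lemma s8_rep_ne {ga gb la lb w : ℝ} (hga : w ≤ ga) (hga2 : ga < w + 1)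
    (hgb : w ≤ gb) (hgb2 : gb < w + 1) (hne : ga ≠ gb)
    (ca : (↑la : Circ) = ↑ga) (cb : (↑lb : Circ) = ↑gb) : la ≠ lb := by
  intro h
  have h2 : (↑ga : Circ) = ↑gb := by rw [← ca, ← cb, h]
  obtain ⟨k, hk⟩ := s8_coe_eq.mp h2
  have hk0 : (k : ℝ) = 0 := s8_int_eq_zero (by linarith) (by linarith)
  rw [hk0] at hk
  exact hne (by linarith)

lemma s8_key {n : ℕ} [NeZero n] (K : Fin n → Set Circ) (γ : Fin n → ℝ) (d : Fin n → ℝ)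
    (al : ℝ)
    (hγw : ∀ j, al ≤ γ j ∧ γ j < al + 1)
    (hK : ∀ j, K j = arc (↑(γ j)) (d j)) (hd0 : ∀ j, 0 < d j) (hd1 : ∀ j, d j < 1)
    (hcov : ∀ x : Circ, ∃ j, x ∈ K j)
    (hU1 : ∀ a b : Fin n, K a ∪ K b = Set.univ → False)
    (hU2 : ∀ a b1 b2 : Fin n, b1 ≠ a → b2 ≠ a → K a ⊆ K b1 ∪ K b2 → False)
    (i : Fin n)
    (hne01 : i ≠ i + 1) (hne12 : i + 1 ≠ i + 2) (hne02 : i ≠ i + 2)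
    (horder3 : (γ i < γ (i+1) ∧ γ (i+1) < γ (i+2)) ∨ (γ (i+1) < γ (i+2) ∧ γ (i+2) < γ i) ∨
      (γ (i+2) < γ i ∧ γ i < γ (i+1)))
    (horderm : ∀ m, m ≠ i → m ≠ i + 1 →
      (γ (i+1) < γ m ∧ γ m < γ i) ∨ (γ m < γ i ∧ γ i < γ (i+1)) ∨
        (γ i < γ (i+1) ∧ γ (i+1) < γ m))
    (horderm2 : ∀ m, m ≠ i → m ≠ i + 1 → m ≠ i + 2 →
      (γ (i+2) < γ m ∧ γ m < γ i) ∨ (γ m < γ i ∧ γ i < γ (i+2)) ∨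
        (γ i < γ (i+2) ∧ γ (i+2) < γ m))
    (x : Circ) (s : ℝ) (hs0 : 0 < s)
    (hx1 : x ∈ K (i+1)) (hx2 : x ∈ K (i+2))
    (hpath : ∀ σ : ℝ, 0 < σ → σ ≤ s → x + (↑σ : Circ) ∈ K i ∪ K (i+1)) :
    x + (↑s : Circ) ∈ K (i+1) ∧ x + (↑s : Circ) ∈ K (i+2) := by
  -- a point `z = ↑ζ` outside `K i ∪ K (i+1)`
  obtain ⟨z, hz⟩ := (Set.ne_univ_iff_exists_notMem (s := K i ∪ K (i+1))).mp
    (fun h => hU1 i (i+1) h)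
  obtain ⟨ζ, hζ⟩ := QuotientAddGroup.mk_surjective z
  have hzU : (↑ζ : Circ) ∉ K i ∪ K (i+1) := by rw [hζ]; exact hz
  have hzi : (↑ζ : Circ) ∉ arc (↑(γ i)) (d i) := by
    rw [← hK i]; exact fun h => hzU (Or.inl h)
  have hzi1 : (↑ζ : Circ) ∉ arc (↑(γ (i+1))) (d (i+1)) := by
    rw [← hK (i+1)]; exact fun h => hzU (Or.inr h)
  obtain ⟨l0, hl0ζ, hl0w, hl0r, hl0c, hl0⟩ := s8_liftArc (hd0 i) (hd1 i) hzi
  obtain ⟨l1, hl1ζ, hl1w, hl1r, hl1c, hl1⟩ := s8_liftArc (hd0 (i+1)) (hd1 (i+1)) hzi1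
  have hKi : ∀ r : ℝ, ζ < r → r < ζ + 1 →
      ((↑r : Circ) ∈ K i ↔ (l0 < r ∧ r < l0 + d i)) := by
    intro r h1 h2; rw [hK i]; exact hl0 r h1 h2
  have hKi1 : ∀ r : ℝ, ζ < r → r < ζ + 1 →
      ((↑r : Circ) ∈ K (i+1) ↔ (l1 < r ∧ r < l1 + d (i+1))) := by
    intro r h1 h2; rw [hK (i+1)]; exact hl1 r h1 h2
  -- a representative of x
  obtain ⟨ξ, hξ1, hξ2, hξ3⟩ := s8_rep_Ico ζ x
  have hξζ : ζ < ξ := by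
    rcases lt_or_eq_of_le hξ1 with h | h
    · exact h
    · exfalso; apply hzU; rw [h, hξ3]; exact Or.inr hx1
  have hξK1 : l1 < ξ ∧ ξ < l1 + d (i+1) := (hKi1 ξ hξζ hξ2).mp (by rw [hξ3]; exact hx1)
  -- the path does not cross the cut point
  have hwin : ∀ σ : ℝ, 0 < σ → σ ≤ s → ξ + σ < ζ + 1 := by
    intro σ h1 h2
    by_contra hcon
    push_neg at hcon
    have h3 : 0 < ζ + 1 - ξ := by linarith
    have h4 : ζ + 1 - ξ ≤ s := by linarith
    have h5 := hpath _ h3 h4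
    have he : x + ((↑(ζ + 1 - ξ) : ℝ) : Circ) = (↑ζ : Circ) := by
      rw [← hξ3, ← s8_coe_add]
      rw [show ξ + (ζ + 1 - ξ) = ζ + 1 by ring]
      exact s8_coe_eq.mpr ⟨-1, by push_cast; ring⟩
    rw [he] at h5
    exact hzU h5
  have hpath' : ∀ σ : ℝ, 0 < σ → σ ≤ s →
      (l0 < ξ + σ ∧ ξ + σ < l0 + d i) ∨ (l1 < ξ + σ ∧ ξ + σ < l1 + d (i+1)) := by
    intro σ h1 h2
    have hm := hpath σ h1 h2
    rw [← hξ3, ← s8_coe_add] at hm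
    rcases hm with h | h
    · exact Or.inl ((hKi _ (by linarith) (hwin σ h1 h2)).mp h)
    · exact Or.inr ((hKi1 _ (by linarith) (hwin σ h1 h2)).mp h)
  -- γ's are pairwise distinct on the three indices
  have hγne01 : γ i ≠ γ (i+1) := by
    rcases horder3 with ⟨h1, h2⟩ | ⟨h1, h2⟩ | ⟨h1, h2⟩ <;> intro h <;> linarith
  have hγne12 : γ (i+1) ≠ γ (i+2) := by
    rcases horder3 with ⟨h1, h2⟩ | ⟨h1, h2⟩ | ⟨h1, h2⟩ <;> intro h <;> linarith
  have hll : l0 ≠ l1 :=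
    s8_rep_ne (hγw i).1 (hγw i).2 (hγw (i+1)).1 (hγw (i+1)).2 hγne01 hl0c hl1c
  -- Step 1 : the path stays inside K (i+1)
  have hstep1 : ξ + s < l1 + d (i+1) := by
    by_contra hcon
    push_neg at hcon
    have h3 : 0 < l1 + d (i+1) - ξ := by linarith [hξK1.2]
    have h4 : l1 + d (i+1) - ξ ≤ s := by linarith
    have hp := hpath' _ h3 h4
    rw [show ξ + (l1 + d (i+1) - ξ) = l1 + d (i+1) by ring] at hp
    rcases hp with ⟨hA1, hA2⟩ | ⟨hB1, hB2⟩
    swap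
    · linarith
    rcases lt_or_gt_of_ne hll with hord | hord
    · -- l0 < l1 : K (i+1) ⊆ K i
      apply hU2 (i+1) i i hne01 hne01
      have hsub : K (i+1) ⊆ K i := by
        rw [hK (i+1), hK i, ← hl1c, ← hl0c]
        exact s8_arc_subset (le_of_lt hord) (by linarith)
      exact hsub.trans Set.subset_union_left
    · -- l1 < l0 : examine who covers the point ↑l1
      obtain ⟨m, hm⟩ := hcov (↑l1 : Circ)
      by_cases hmi : m = i
      · rw [hmi, hK i, ← hl0c, s8_mem_arc] at hm
        obtain ⟨k, hk1, hk2⟩ := hm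
        have hk0 : (k : ℝ) = 0 := s8_int_eq_zero (by linarith) (by linarith)
        rw [hk0] at hk1
        linarith
      by_cases hmi1 : m = i + 1
      · rw [hmi1, hK (i+1), ← hl1c, s8_mem_arc] at hm
        obtain ⟨k, hk1, hk2⟩ := hm
        have hk0 : (k : ℝ) = 0 := s8_int_eq_zero (by linarith) (by linarith [hd1 (i+1)])
        rw [hk0] at hk1
        linarith
      · obtain ⟨lm, hlm1, hlm2, hlm3⟩ := s8_rep_Ico ζ (↑(γ m) : Circ)
        have hrotm := s8_cyc (horderm m hmi hmi1)
          (hγw (i+1)).1 (hγw (i+1)).2 (hγw m).1 (hγw m).2 (hγw i).1 (hγw i).2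
          hl1ζ hl1w hlm1 hlm2 hl0ζ hl0w hl1c hlm3 hl0c
        have hlmr : l1 < lm ∧ lm < l0 := by
          rcases hrotm with h | h | h
          · exact h
          · exact absurd hord (by linarith [h.1, h.2])
          · exact absurd hord (by linarith [h.1, h.2])
        rw [hK m, show arc (↑(γ m) : Circ) (d m) = arc (↑lm) (d m) by rw [hlm3],
          s8_mem_arc] at hm
        obtain ⟨k, hk1, hk2⟩ := hm
        have hkb1 : (-1 : ℝ) < (k : ℝ) := by linarith [hlmr.1]
        have hkb2 : (k : ℝ) < 2 := by linarith [hd1 m]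
        have : k = 0 ∨ k = 1 := by
          have a1 : (-1:ℤ) < k := by exact_mod_cast hkb1
          have a2 : k < 2 := by exact_mod_cast hkb2
          omega
        rcases this with hk | hk
        · rw [hk] at hk1; push_cast at hk1; linarith [hlmr.1]
        · rw [hk] at hk2; push_cast at hk2
          apply hU1 (i+1) m
          apply s8_twoCover (u1 := l1) (v1 := l1 + d (i+1)) (u2 := lm) (v2 := lm + d m)
          · intro r h1 h2
            rw [hK (i+1), ← hl1c]; exact s8_mem_arc_of h1 h2
          · intro r h1 h2
            rw [hK m, show arc (↑(γ m) : Circ) (d m) = arc (↑lm) (d m) by rw [hlm3]]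
            exact s8_mem_arc_of h1 h2
          · linarith [hlmr.2]
          · linarith
  -- hence x + s ∈ K (i+1)
  have hw : ξ + s < ζ + 1 := hwin s hs0 le_rfl
  have hmem1 : x + (↑s : Circ) ∈ K (i+1) := by
    rw [← hξ3, ← s8_coe_add]
    exact (hKi1 _ (by linarith) hw).mpr ⟨by linarith [hξK1.1], hstep1⟩
  refine ⟨hmem1, ?_⟩
  by_cases hz2 : (↑ζ : Circ) ∈ arc (↑(γ (i+2))) (d (i+2))
  · -- Case B : the cut point is inside K (i+2)
    obtain ⟨mu, hmu1, hmu2, hmuc, hmu⟩ := s8_liftArcWrap (hd1 (i+2)) hz2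
    have hKi2 : ∀ r : ℝ, ζ < r → r < ζ + 1 →
        ((↑r : Circ) ∈ K (i+2) ↔ (r < mu + d (i+2) ∨ mu + 1 < r)) := by
      intro r h1 h2; rw [hK (i+2)]; exact hmu r h1 h2
    have hmuζ : ζ - 1 < mu := by linarith [hd1 (i+2)]
    have hξK2 := (hKi2 ξ hξζ hξ2).mp (by rw [hξ3]; exact hx2)
    rcases hξK2 with hcase | hcase
    · -- hard subcase : ξ lies in the right tail of K (i+2) ; contradiction
      exfalso
      have hl1l2 : l1 < mu + 1 := by linarith [hξK1.1, hd1 (i+2)]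
      -- first : r(K (i+1)) ≤ mu + 1
      have hρ1le : l1 + d (i+1) ≤ mu + 1 := by
        by_contra hc
        push_neg at hc
        apply hU1 (i+2) (i+1)
        apply s8_twoCover (u1 := mu) (v1 := mu + d (i+2)) (u2 := l1) (v2 := l1 + d (i+1))
        · intro r h1 h2
          rw [hK (i+2), ← hmuc]; exact s8_mem_arc_of h1 h2
        · intro r h1 h2
          rw [hK (i+1), ← hl1c]; exact s8_mem_arc_of h1 h2
        · linarith [hξK1.1]
        · exact hc
      have hcoe2 : ((mu + 1 : ℝ) : Circ) = ↑(γ (i+2)) := by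
        rw [show ((mu + 1 : ℝ) : Circ) = ↑mu from s8_coe_eq.mpr ⟨-1, by push_cast; ring⟩]
        exact hmuc
      have hrot012 := s8_cyc horder3
        (hγw i).1 (hγw i).2 (hγw (i+1)).1 (hγw (i+1)).2 (hγw (i+2)).1 (hγw (i+2)).2
        hl0ζ hl0w hl1ζ hl1w (by linarith) (by linarith) hl0c hl1c hcoe2
      have hdisj : l0 < l1 ∨ mu + 1 < l0 := by
        rcases hrot012 with ⟨h1, h2⟩ | ⟨h1, h2⟩ | ⟨h1, h2⟩
        · exact Or.inl h1
        · exact Or.inr h2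
        · exact Or.inl h2
      -- who covers the point ↑(mu+1) = c (i+2) ?
      obtain ⟨m, hm⟩ := hcov ((mu + 1 : ℝ) : Circ)
      by_cases hmi : m = i
      · rw [hmi, hK i, ← hl0c, s8_mem_arc] at hm
        obtain ⟨k, hk1, hk2⟩ := hm
        have hk0 : (k : ℝ) = 0 := s8_int_eq_zero (by linarith) (by linarith)
        rw [hk0] at hk1 hk2
        rcases hdisj with h | h
        · -- l0 < l1 and K (i+1) ⊆ K i
          apply hU2 (i+1) i i hne01 hne01
          have hsub : K (i+1) ⊆ K i := by
            rw [hK (i+1), hK i, ← hl1c, ← hl0c]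
            exact s8_arc_subset (le_of_lt h) (by linarith)
          exact hsub.trans Set.subset_union_left
        · linarith
      by_cases hmi1 : m = i + 1
      · rw [hmi1, hK (i+1), ← hl1c, s8_mem_arc] at hm
        obtain ⟨k, hk1, hk2⟩ := hm
        have hk0 : (k : ℝ) = 0 := s8_int_eq_zero (by linarith) (by linarith)
        rw [hk0] at hk1 hk2
        linarith
      by_cases hmi2 : m = i + 2
      · rw [hmi2, hK (i+2), ← hmuc, s8_mem_arc] at hm
        obtain ⟨k, hk1, hk2⟩ := hm
        have hk0 : (k : ℝ) = 0 := s8_int_eq_zero (by linarith) (by linarith [hd1 (i+2)])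
        rw [hk0] at hk2
        linarith [hd1 (i+2)]
      · obtain ⟨lm, hlm1, hlm2, hlm3⟩ := s8_rep_Ico ζ (↑(γ m) : Circ)
        have hrotm := s8_cyc (horderm2 m hmi hmi1 hmi2)
          (hγw (i+2)).1 (hγw (i+2)).2 (hγw m).1 (hγw m).2 (hγw i).1 (hγw i).2
          (by linarith) (by linarith) hlm1 hlm2 hl0ζ hl0w hcoe2 hlm3 hl0c
        rw [hK m, show arc (↑(γ m) : Circ) (d m) = arc (↑lm) (d m) by rw [hlm3],
          s8_mem_arc] at hm
        obtain ⟨k, hk1, hk2⟩ := hm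
        have hkb1 : (-1 : ℝ) < (k : ℝ) := by linarith
        have hkb2 : (k : ℝ) < 2 := by linarith [hd1 m]
        have hk01 : k = 0 ∨ k = 1 := by
          have a1 : (-1:ℤ) < k := by exact_mod_cast hkb1
          have a2 : k < 2 := by exact_mod_cast hkb2
          omega
        rcases hk01 with hk | hk
        · -- k = 0 : lm < mu+1 < lm + d m
          rw [hk] at hk1 hk2
          push_cast at hk1 hk2
          have hlml2 : lm < mu + 1 := by linarith
          have hrot' : lm < l0 ∧ l0 < mu + 1 := by
            rcases hrotm with h | h | h
            · exact absurd hlml2 (by linarith [h.1])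
            · exact h
            · exact absurd hlml2 (by linarith [h.2])
          have hl0l1 : l0 < l1 := by
            rcases hdisj with h | h
            · exact h
            · exact absurd h (by linarith [hrot'.2])
          apply hU2 (i+1) m m hmi1 hmi1
          have hsub : K (i+1) ⊆ K m := by
            rw [hK (i+1), hK m, ← hl1c,
              show arc (↑(γ m) : Circ) (d m) = arc (↑lm) (d m) by rw [hlm3]]
            exact s8_arc_subset (by linarith [hrot'.1]) (by linarith)
          exact hsub.trans Set.subset_union_left
        · -- k = 1 : lm + d m > mu + 2, so K (i+1) ⊆ K m (wrapping)
          rw [hk] at hk1 hk2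
          push_cast at hk1 hk2
          apply hU2 (i+1) m m hmi1 hmi1
          have hsub : K (i+1) ⊆ K m := by
            intro y hy
            rw [hK (i+1), ← hl1c, s8_arc_eq_image] at hy
            obtain ⟨r, ⟨hr1, hr2⟩, rfl⟩ := hy
            rw [hK m, show arc (↑(γ m) : Circ) (d m) = arc (↑lm) (d m) by rw [hlm3],
              s8_mem_arc]
            exact ⟨1, by push_cast; constructor <;> linarith⟩
          exact hsub.trans Set.subset_union_left
    · -- easy subcase : ξ > mu + 1 ; the endpoint stays in the left part of K (i+2)
      rw [← hξ3, ← s8_coe_add]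
      exact (hKi2 _ (by linarith) hw).mpr (Or.inr (by linarith))
  · -- Case A : the cut point is not in K (i+2)
    obtain ⟨l2, hl2ζ, hl2w, hl2r, hl2c, hl2⟩ := s8_liftArc (hd0 (i+2)) (hd1 (i+2)) hz2
    have hKi2 : ∀ r : ℝ, ζ < r → r < ζ + 1 →
        ((↑r : Circ) ∈ K (i+2) ↔ (l2 < r ∧ r < l2 + d (i+2))) := by
      intro r h1 h2; rw [hK (i+2)]; exact hl2 r h1 h2
    have hξK2 := (hKi2 ξ hξζ hξ2).mp (by rw [hξ3]; exact hx2)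
    have hstep2 : ξ + s < l2 + d (i+2) := by
      by_contra hc
      push_neg at hc
      have hρ2ρ1 : l2 + d (i+2) < l1 + d (i+1) := by linarith
      have hρ2l1 : l1 < l2 + d (i+2) := by linarith [hξK1.1, hξK2.2]
      have hll12 : l1 ≠ l2 :=
        s8_rep_ne (hγw (i+1)).1 (hγw (i+1)).2 (hγw (i+2)).1 (hγw (i+2)).2 hγne12 hl1c hl2c
      rcases lt_or_gt_of_ne hll12 with h | h
      · -- l1 < l2 : K (i+2) ⊆ K (i+1)
        apply hU2 (i+2) (i+1) (i+1) hne12 hne12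
        have hsub : K (i+2) ⊆ K (i+1) := by
          rw [hK (i+2), hK (i+1), ← hl2c, ← hl1c]
          exact s8_arc_subset (le_of_lt h) (le_of_lt hρ2ρ1)
        exact hsub.trans Set.subset_union_left
      · -- l2 < l1 : cyclic order forces l2 < l0 < l1
        have hrot012 := s8_cyc horder3
          (hγw i).1 (hγw i).2 (hγw (i+1)).1 (hγw (i+1)).2 (hγw (i+2)).1 (hγw (i+2)).2
          hl0ζ hl0w hl1ζ hl1w hl2ζ hl2w hl0c hl1c hl2c
        have hrot' : l2 < l0 ∧ l0 < l1 := by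
          rcases hrot012 with h' | h' | h'
          · exact absurd h (by linarith [h'.2])
          · exact absurd h (by linarith [h'.1])
          · exact h'
        rcases le_or_gt (l0 + d i) (l1 + d (i+1)) with hr | hr
        · -- K i ⊆ K (i+1) ∪ K (i+2)
          apply hU2 i (i+1) (i+2) (Ne.symm hne01) (Ne.symm hne02)
          intro y hy
          rw [hK i, ← hl0c, s8_arc_eq_image] at hy
          obtain ⟨r, ⟨hr1, hr2⟩, rfl⟩ := hy
          rcases lt_or_ge r (l2 + d (i+2)) with hrr | hrr
          · right
            rw [hK (i+2), ← hl2c]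
            exact s8_mem_arc_of (by linarith [hrot'.1]) hrr
          · left
            rw [hK (i+1), ← hl1c]
            exact s8_mem_arc_of (by linarith) (by linarith)
        · -- K (i+1) ⊆ K i
          apply hU2 (i+1) i i hne01 hne01
          have hsub : K (i+1) ⊆ K i := by
            rw [hK (i+1), hK i, ← hl1c, ← hl0c]
            exact s8_arc_subset (le_of_lt hrot'.2) (le_of_lt hr)
          exact hsub.trans Set.subset_union_left
    rw [← hξ3, ← s8_coe_add]
    exact (hKi2 _ (by linarith) hw).mpr ⟨by linarith [hξK2.1], hstep2⟩

end S8Helpers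

/-- For a minimal circle cover `K_0, …, K_{n-1}` (`n ≥ 3`), cyclically ordered clockwise,
and an open arc `A ⊆ K i ∪ K (i+1)`, the set `A \ ΔK_{i+1}` (where
`ΔK_{i+1} = K_{i+1} ∩ K_{i+2}`) is a connected subset of the circle. -/
theorem stmt8 (n : ℕ) [NeZero n] (hn : 3 ≤ n) (K : Fin n → Set Circ)
    (c : Fin n → Circ) (d : Fin n → ℝ)
    (hKarc : ∀ i, K i = arc (c i) (d i) ∧ 0 < d i ∧ d i < 1)
    (hKcov : (⋃ i, K i) = Set.univ)
    (hmin : ∀ (m : ℕ) (K' : Fin m → Set Circ), (∀ j, ∃ i, K' j = K i) →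
      (⋃ j, K' j) = Set.univ → n ≤ m)
    (hord : CyclicallyOrdered c)
    (A : Set Circ) (hA : IsArc A) (i : Fin n) (hsub : A ⊆ K i ∪ K (i + 1)) :
    IsPreconnected (A \ (K (i + 1) ∩ K (i + 2))) := by
  obtain ⟨a, dA, hdA0, hdA1, hAeq⟩ := hA
  obtain ⟨a0, t, htmono, htIco, hct⟩ := hord
  obtain ⟨al, hal⟩ := QuotientAddGroup.mk_surjective a0
  set γ : Fin n → ℝ := fun j => al + t j with hγdef
  have hγmono : StrictMono γ := fun p q h => by
    simp only [hγdef]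
    exact (add_lt_add_iff_left al).mpr (htmono h)
  have hγw : ∀ j, al ≤ γ j ∧ γ j < al + 1 := by
    intro j
    constructor
    · simp only [hγdef]; linarith [(htIco j).1]
    · simp only [hγdef]; linarith [(htIco j).2]
  have hγc : ∀ j, ((γ j : ℝ) : Circ) = c j := by
    intro j
    rw [hct j, ← hal]
    exact s8_coe_add al (t j)
  have hK : ∀ j, K j = arc (↑(γ j)) (d j) := by
    intro j; rw [(hKarc j).1, ← hγc j]
  have hd0 : ∀ j, 0 < d j := fun j => (hKarc j).2.1
  have hd1' : ∀ j, d j < 1 := fun j => (hKarc j).2.2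
  have hcov : ∀ x : Circ, ∃ j, x ∈ K j := fun x =>
    Set.mem_iUnion.mp (hKcov ▸ Set.mem_univ x)
  -- no two arcs cover the circle
  have hU1 : ∀ p q : Fin n, K p ∪ K q = Set.univ → False := by
    intro p q h
    have h2 : (⋃ j, (![K p, K q] : Fin 2 → Set Circ) j) = Set.univ := by
      ext y
      simp only [Set.mem_iUnion, Set.mem_univ, iff_true]
      have hy : y ∈ K p ∪ K q := by rw [h]; exact Set.mem_univ y
      rcases hy with h' | h'
      · exact ⟨0, h'⟩
      · exact ⟨1, h'⟩
    have h3 := hmin 2 ![K p, K q] (by intro j; fin_cases j <;> [exact ⟨p, rfl⟩; exact ⟨q, rfl⟩]) h2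
    omega
  -- no arc is contained in the union of two others
  have hU2 : ∀ p q1 q2 : Fin n, q1 ≠ p → q2 ≠ p → K p ⊆ K q1 ∪ K q2 → False := by
    intro p q1 q2 hq1 hq2 hsub'
    have hpos : n - 1 + 1 = n := by omega
    set e : Fin (n-1) → Fin n := fun j => Fin.cast hpos ((Fin.cast hpos.symm p).succAbove j)
      with he
    have hsurj : ∀ b : Fin n, b ≠ p → ∃ j, e j = b := by
      intro b hb
      obtain ⟨j, hj⟩ := Fin.exists_succAbove_eq
        (x := Fin.cast hpos.symm b) (y := Fin.cast hpos.symm p)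
        (by intro h; apply hb; exact Fin.ext (by simpa using congrArg Fin.val h))
      refine ⟨j, ?_⟩
      simp only [he]
      rw [hj]
      exact Fin.ext (by simp)
    have hcov' : (⋃ j, K (e j)) = Set.univ := by
      ext y
      simp only [Set.mem_iUnion, Set.mem_univ, iff_true]
      obtain ⟨m, hm⟩ := hcov y
      by_cases hmp : m = p
      · rcases hsub' (hmp ▸ hm) with h' | h'
        · obtain ⟨j, hj⟩ := hsurj q1 hq1; exact ⟨j, by rw [hj]; exact h'⟩
        · obtain ⟨j, hj⟩ := hsurj q2 hq2; exact ⟨j, by rw [hj]; exact h'⟩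
      · obtain ⟨j, hj⟩ := hsurj m hmp; exact ⟨j, by rw [hj]; exact hm⟩
    have := hmin (n-1) (fun j => K (e j)) (fun j => ⟨e j, rfl⟩) hcov'
    omega
  -- index arithmetic in `Fin n`
  have hvlt : i.val < n := i.isLt
  have hone : (1 : Fin n).val = 1 := by rw [Fin.val_one', Nat.mod_eq_of_lt (by omega)]
  have hv1 : (i + 1 : Fin n).val = (i.val + 1) % n := by rw [Fin.val_add, hone]
  have hv2 : (i + 2 : Fin n).val = (i.val + 2) % n := by
    have h2 : (i + 2 : Fin n) = (i + 1) + 1 := by rw [add_assoc]; congr 1; exact Fin.ext (by rw [Fin.val_add, hone]; simp)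
    rw [h2, Fin.val_add, hone, hv1, Nat.mod_add_mod]
  have hsplit : (i.val + 2 < n ∧ (i+1 : Fin n).val = i.val + 1 ∧ (i+2 : Fin n).val = i.val + 2) ∨
      (i.val + 2 = n ∧ (i+1 : Fin n).val = i.val + 1 ∧ (i+2 : Fin n).val = 0) ∨
      (i.val + 1 = n ∧ (i+1 : Fin n).val = 0 ∧ (i+2 : Fin n).val = 1) := by
    rcases (show i.val + 2 < n ∨ i.val + 2 = n ∨ i.val + 1 = n by omega) with h | h | h
    · exact Or.inl ⟨h, by rw [hv1, Nat.mod_eq_of_lt (by omega)],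
        by rw [hv2, Nat.mod_eq_of_lt (by omega)]⟩
    · refine Or.inr (Or.inl ⟨h, by rw [hv1, Nat.mod_eq_of_lt (by omega)], ?_⟩)
      rw [hv2, h, Nat.mod_self]
    · refine Or.inr (Or.inr ⟨h, by rw [hv1, h, Nat.mod_self], ?_⟩)
      rw [hv2, show i.val + 2 = n + 1 by omega, Nat.add_mod_left, Nat.mod_eq_of_lt (by omega)]
  have hne01 : i ≠ i + 1 := by
    intro h
    have hc := congrArg Fin.val h
    rcases hsplit with ⟨h1, e1, e2⟩ | ⟨h1, e1, e2⟩ | ⟨h1, e1, e2⟩ <;> rw [e1] at hc <;> omega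
  have hne12 : i + 1 ≠ i + 2 := by
    intro h
    have hc := congrArg Fin.val h
    rcases hsplit with ⟨h1, e1, e2⟩ | ⟨h1, e1, e2⟩ | ⟨h1, e1, e2⟩ <;> rw [e1, e2] at hc <;> omega
  have hne02 : i ≠ i + 2 := by
    intro h
    have hc := congrArg Fin.val h
    rcases hsplit with ⟨h1, e1, e2⟩ | ⟨h1, e1, e2⟩ | ⟨h1, e1, e2⟩ <;> rw [e2] at hc <;> omega
  have horder3 : (γ i < γ (i+1) ∧ γ (i+1) < γ (i+2)) ∨ (γ (i+1) < γ (i+2) ∧ γ (i+2) < γ i) ∨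
      (γ (i+2) < γ i ∧ γ i < γ (i+1)) := by
    apply s8_rot hγmono
    rcases hsplit with ⟨h1, e1, e2⟩ | ⟨h1, e1, e2⟩ | ⟨h1, e1, e2⟩ <;> rw [e1, e2] <;> omega
  have horderm : ∀ m, m ≠ i → m ≠ i + 1 →
      (γ (i+1) < γ m ∧ γ m < γ i) ∨ (γ m < γ i ∧ γ i < γ (i+1)) ∨
        (γ i < γ (i+1) ∧ γ (i+1) < γ m) := by
    intro m hm1 hm2
    apply s8_rot hγmono
    have hq1 : m.val ≠ i.val := fun h => hm1 (Fin.ext h)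
    have hq2 : m.val ≠ (i + 1 : Fin n).val := fun h => hm2 (Fin.ext h)
    have hqn : m.val < n := m.isLt
    rcases hsplit with ⟨h1, e1, e2⟩ | ⟨h1, e1, e2⟩ | ⟨h1, e1, e2⟩ <;> rw [e1] at hq2 ⊢ <;> omega
  have horderm2 : ∀ m, m ≠ i → m ≠ i + 1 → m ≠ i + 2 →
      (γ (i+2) < γ m ∧ γ m < γ i) ∨ (γ m < γ i ∧ γ i < γ (i+2)) ∨
        (γ i < γ (i+2) ∧ γ (i+2) < γ m) := by
    intro m hm1 hm2 hm3
    apply s8_rot hγmono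
    have hq1 : m.val ≠ i.val := fun h => hm1 (Fin.ext h)
    have hq2 : m.val ≠ (i + 1 : Fin n).val := fun h => hm2 (Fin.ext h)
    have hq3 : m.val ≠ (i + 2 : Fin n).val := fun h => hm3 (Fin.ext h)
    have hqn : m.val < n := m.isLt
    rcases hsplit with ⟨h1, e1, e2⟩ | ⟨h1, e1, e2⟩ | ⟨h1, e1, e2⟩ <;> rw [e1] at hq2 <;>
      rw [e2] at hq3 ⊢ <;> omega
  -- the connectivity argument
  set f : ℝ → Circ := fun τ => a + (↑τ : Circ) with hf
  have hfc : Continuous f := continuous_const.add (AddCircle.continuous_mk' 1)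
  have hS : IsPreconnected (Set.Ioo (0:ℝ) dA ∩ f ⁻¹' (K (i+1) ∩ K (i+2))ᶜ) := by
    apply Set.OrdConnected.isPreconnected
    constructor
    intro p hp q hq u hu
    have hp1 : (0:ℝ) < p := hp.1.1
    have hq1 : q < dA := hq.1.2
    have hq2 : f q ∉ K (i+1) ∩ K (i+2) := hq.2
    refine ⟨⟨lt_of_lt_of_le hp1 hu.1, lt_of_le_of_lt hu.2 hq1⟩, ?_⟩
    simp only [Set.mem_preimage, Set.mem_compl_iff]
    intro hBu
    rcases eq_or_lt_of_le hu.2 with he | hlt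
    · exact hq2 (by rw [← he]; exact hBu)
    · have hkey := s8_key K γ d al hγw hK hd0 hd1' hcov hU1 hU2 i hne01 hne12 hne02
        horder3 horderm horderm2 (f u) (q - u) (by linarith) hBu.1 hBu.2 ?_
      · apply hq2
        have heq : f u + ((q - u : ℝ) : Circ) = f q := by
          simp only [hf]
          rw [add_assoc, ← s8_coe_add]
          norm_num
        rw [heq] at hkey
        exact ⟨hkey.1, hkey.2⟩
      · intro σ h1 h2
        apply hsub
        rw [hAeq]
        refine ⟨u + σ, ⟨by linarith [hu.1], by linarith⟩, ?_⟩
        show a + ((u + σ : ℝ) : Circ) = f u + (↑σ : Circ)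
        simp only [hf]
        rw [add_assoc, ← s8_coe_add]
  have himg : A \ (K (i+1) ∩ K (i+2)) =
      f '' (Set.Ioo (0:ℝ) dA ∩ f ⁻¹' (K (i+1) ∩ K (i+2))ᶜ) := by
    rw [Set.image_inter_preimage, Set.diff_eq, hAeq]
    rfl
  rw [himg]
  exact hS.image f hfc.continuousOn


end
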